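/- Let C be a field of characteristic zero containing an element q that is not a root of unity, K a field extension of C, F = K(t), and τ : F → F the K-automorphism with τ(t) = qt. Suppose h ∈ K(t) admits an expansion h = Σ_{i≥m} aᵢ/tⁱ with aᵢ ∈ K, a_m ≠ 0, m ≠ 1, and h satisfies (1/(q⁴t²))τ³(h) + (1/(q³t²) + q²)τ²(h) − (1/(q⁴t²) + q)τ(h) − (1/(q³t²))h − 2/t = 0, where τ acts on K in some compatible way. Then comparing coefficients of 1/t^m yields τ(a_m) = q^{m−1}·a_m, i.e., a_m/t^{m−1} is fixed by τ. -/

import Mathlib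

theorem stmt16 {K : Type*} [Field K] [CharZero K]
    (q : K) (hq : q ≠ 0) (hroot : ∀ n : ℕ, 0 < n → q ^ n ≠ 1)
    (τ : K →+* K) (hτ : Function.Injective τ) (hτq : τ q = q)
    -- `h = Σ_{i ≥ m} aᵢ/tⁱ` is a formal Laurent expansion at `t = ∞`
    (a : ℤ → K) (m : ℤ) (hm : m ≠ 1)
    (hlow : ∀ i : ℤ, i < m → a i = 0) (ham : a m ≠ 0)
    -- the identity in `K((1/t))`, written coefficientwise at `(1/t)ⁿ`;
    -- note `τᵏ(h) = Σᵢ τᵏ(aᵢ) q^{-k i} (1/t)ⁱ` since `τ(t) = q t`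
    (heq : ∀ n : ℤ,
      q ^ (-4 : ℤ) * ((⇑τ)^[3] (a (n - 2)) * q ^ (-(3 : ℤ) * (n - 2)))
        + q ^ (-3 : ℤ) * ((⇑τ)^[2] (a (n - 2)) * q ^ (-(2 : ℤ) * (n - 2)))
        + q ^ (2 : ℤ) * ((⇑τ)^[2] (a n) * q ^ (-(2 : ℤ) * n))
        - q ^ (-4 : ℤ) * (τ (a (n - 2)) * q ^ (-(n - 2)))
        - q * (τ (a n) * q ^ (-n))
        - q ^ (-3 : ℤ) * a (n - 2)
        - (if n = 1 then 2 else 0) = 0) :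
    τ (a m) = q ^ (m - 1) * a m := by
  have h0 : a (m - 2) = 0 := hlow _ (by omega)
  have h1 := heq m
  rw [h0] at h1
  simp [Function.iterate_succ_apply', hm] at h1
  have h2 : q ^ (2:ℤ) * τ (τ (a m)) * (q ^ (2*m))⁻¹ = q * τ (a m) * (q ^ m)⁻¹ := by
    rw [zpow_two]; linear_combination h1
  have key : τ (τ (a m)) = q ^ (m - 1) * τ (a m) := by
    field_simp at h2
    replace h2 : q ^ (2:ℤ) * τ (τ (a m)) * q ^ m = q * τ (a m) * q ^ (2*m) := by
      rw [zpow_two]; linear_combination q * h2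
    -- h2 : q^2 * ττ * q^m = q * τam * q^(2m)
    have e : q ^ (2:ℤ) * q ^ m ≠ 0 := mul_ne_zero (zpow_ne_zero _ hq) (zpow_ne_zero _ hq)
    apply mul_left_cancel₀ e
    calc q ^ (2:ℤ) * q ^ m * τ (τ (a m)) = q ^ (2:ℤ) * τ (τ (a m)) * q ^ m := by ring
      _ = q * τ (a m) * q ^ (2*m) := h2
      _ = q ^ (2*m+1) * τ (a m) := by rw [zpow_add₀ hq, zpow_one]; ring
      _ = q ^ (2:ℤ) * q ^ m * (q ^ (m-1) * τ (a m)) := by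
          rw [← zpow_add₀ hq, ← mul_assoc, ← zpow_add₀ hq,
            show (2:ℤ)+m+(m-1) = 2*m+1 by ring]
  apply hτ
  rw [key, map_mul, map_zpow₀, hτq]
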